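/- arXiv:2211.14672 — 2 statements merged into one kernel-verified Lean document; each statement's English description precedes it below -/
import Mathlib

section
/- Let K, L, t be natural numbers with L ≥ 1 and t + L ≤ K. Then, in ℚ, (C(t+L−1, t) · C(K, t+L)) / (C(K, t) · C(K−t−1, L−1)) = (K − t)/(L + t), where C(n, k) denotes the binomial coefficient n choose k. -/
/-- Coding-delay counting identity for the secure multi-transmitter scheme:
`C(t+L−1,t)·C(K,t+L) / (C(K,t)·C(K−t−1,L−1)) = (K−t)/(L+t)` in `ℚ`. -/
theorem secure_multi_transmitter_block_count
    (K L t : ℕ) (hL : 1 ≤ L) (hK : t + L ≤ K) :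
    ((Nat.choose (t + L - 1) t : ℚ) * (Nat.choose K (t + L) : ℚ)) /
        ((Nat.choose K t : ℚ) * (Nat.choose (K - t - 1) (L - 1) : ℚ)) =
      ((K : ℚ) - t) / ((L : ℚ) + t) := by
  obtain ⟨l, rfl⟩ : ∃ l, L = l + 1 := ⟨L - 1, by omega⟩
  obtain ⟨M, rfl⟩ : ∃ M, K = t + (l + 1) + M := ⟨K - (t + (l + 1)), by omega⟩
  have h1 : t + (l + 1) - 1 = t + l := by omega
  have h2 : t + (l + 1) + M - t - 1 = l + M := by omega
  have h3 : l + 1 - 1 = l := by omega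
  rw [h1, h2, h3,
      Nat.cast_choose ℚ (by omega : t ≤ t + l),
      Nat.cast_choose ℚ (by omega : t + (l + 1) ≤ t + (l + 1) + M),
      Nat.cast_choose ℚ (by omega : t ≤ t + (l + 1) + M),
      Nat.cast_choose ℚ (by omega : l ≤ l + M)]
  have e1 : t + l - t = l := by omega
  have e2 : t + (l + 1) + M - (t + (l + 1)) = M := by omega
  have e3 : t + (l + 1) + M - t = l + 1 + M := by omega
  have e4 : l + M - l = M := by omega
  rw [e1, e2, e3, e4]
  have f1 : ((t + (l + 1)).factorial : ℚ) = ((t + l : ℕ) + 1) * (t + l).factorial := by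
    have : t + (l + 1) = (t + l) + 1 := by omega
    rw [this, Nat.factorial_succ]; push_cast; ring
  have f2 : ((l + 1 + M).factorial : ℚ) = ((l + M : ℕ) + 1) * (l + M).factorial := by
    have : l + 1 + M = (l + M) + 1 := by omega
    rw [this, Nat.factorial_succ]; push_cast; ring
  rw [f1, f2]
  have n1 : ((t.factorial : ℚ)) ≠ 0 := Nat.cast_ne_zero.mpr (Nat.factorial_ne_zero t)
  have n2 : ((l.factorial : ℚ)) ≠ 0 := Nat.cast_ne_zero.mpr (Nat.factorial_ne_zero l)
  have n3 : (((t + l).factorial : ℚ)) ≠ 0 := Nat.cast_ne_zero.mpr (Nat.factorial_ne_zero _)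
  have n4 : ((M.factorial : ℚ)) ≠ 0 := Nat.cast_ne_zero.mpr (Nat.factorial_ne_zero M)
  have n5 : (((l + M).factorial : ℚ)) ≠ 0 := Nat.cast_ne_zero.mpr (Nat.factorial_ne_zero _)
  have n6 : (((t + (l + 1) + M).factorial : ℚ)) ≠ 0 :=
    Nat.cast_ne_zero.mpr (Nat.factorial_ne_zero _)
  have n7 : ((l : ℚ) + 1 + t) ≠ 0 := by positivity
  have n8 : ((t : ℚ) + l + 1) ≠ 0 := by positivity
  have n9 : ((l : ℚ) + M + 1) ≠ 0 := by positivity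
  push_cast
  field_simp
  ring
end

section
/- Let K, N, L, t be natural numbers with 1 ≤ t and t + L ≤ K and L ≥ 1. Then, in ℚ, N · C(K−1, t−1) / C(K, t) + (C(K−1, t+L−1) · C(t+L−1, t)) / (C(K, t) · C(K−t−1, L−1)) = N·t/K + (K − t)/K. In particular, the data stored per user occupies N·t/K files and the keys occupy (K−t)/K of a file, so the total cache usage equals M = N·t/K + (1 − t/K). -/
/-- Cache memory accounting for the secure centralized multi-transmitter
scheme: data storage `N·C(K−1,t−1)/C(K,t)` plus key storage
`C(K−1,t+L−1)·C(t+L−1,t)/(C(K,t)·C(K−t−1,L−1))` equals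
`N·t/K + (K−t)/K` in `ℚ`. -/
theorem secure_multi_transmitter_memory
    (K N L t : ℕ) (ht : 1 ≤ t) (hK : t + L ≤ K) (hL : 1 ≤ L) :
    (N : ℚ) * (Nat.choose (K - 1) (t - 1) : ℚ) / (Nat.choose K t : ℚ) +
        ((Nat.choose (K - 1) (t + L - 1) : ℚ) * (Nat.choose (t + L - 1) t : ℚ)) /
          ((Nat.choose K t : ℚ) * (Nat.choose (K - t - 1) (L - 1) : ℚ)) =
      (N : ℚ) * t / K + ((K : ℚ) - t) / K := by
  have htK : t ≤ K := le_trans (Nat.le_add_right t L) hK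
  have hK1 : 1 ≤ K := le_trans ht htK
  have hKpos : (0 : ℚ) < (K : ℚ) := by exact_mod_cast hK1
  have hCt : (0 : ℚ) < (Nat.choose K t : ℚ) := by
    exact_mod_cast Nat.choose_pos htK
  have hL1 : L - 1 ≤ K - t - 1 := by omega
  have hC2 : (0 : ℚ) < (Nat.choose (K - t - 1) (L - 1) : ℚ) := by
    exact_mod_cast Nat.choose_pos hL1
  -- Nat identity 1: K * C(K-1,t-1) = C(K,t) * t
  have hA : K * Nat.choose (K - 1) (t - 1) = Nat.choose K t * t := by
    have := Nat.add_one_mul_choose_eq (K - 1) (t - 1)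
    rwa [Nat.sub_add_cancel hK1, Nat.sub_add_cancel ht] at this
  -- Nat identity 2: C(K-1,t) * K = C(K,t) * (K - t)
  have hB : Nat.choose (K - 1) t * K = Nat.choose K t * (K - t) := by
    have := Nat.choose_mul_succ_eq (K - 1) t
    rwa [Nat.sub_add_cancel hK1] at this
  -- Nat identity 3: subset-of-subset
  have hC : Nat.choose (K - 1) (t + L - 1) * Nat.choose (t + L - 1) t =
      Nat.choose (K - 1) t * Nat.choose (K - t - 1) (L - 1) := by
    have h := Nat.choose_mul (n := K - 1) (k := t + L - 1) (s := t) (by omega)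
    have e1 : K - 1 - t = K - t - 1 := by omega
    have e2 : t + L - 1 - t = L - 1 := by omega
    rw [h, e1, e2]
  have q1 : ((Nat.choose (K - 1) (t - 1) : ℚ)) / (Nat.choose K t : ℚ) = (t : ℚ) / K := by
    rw [div_eq_div_iff hCt.ne' hKpos.ne']
    have : Nat.choose (K - 1) (t - 1) * K = t * Nat.choose K t := by
      rw [Nat.mul_comm, hA, Nat.mul_comm]
    exact_mod_cast this
  have q2 : ((Nat.choose (K - 1) (t + L - 1) : ℚ) * (Nat.choose (t + L - 1) t : ℚ)) /
      ((Nat.choose K t : ℚ) * (Nat.choose (K - t - 1) (L - 1) : ℚ)) = ((K : ℚ) - t) / K := by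
    have hKt : ((K : ℚ) - t) = ((K - t : ℕ) : ℚ) := by
      push_cast [Nat.cast_sub htK]; ring
    rw [hKt, div_eq_div_iff (by positivity) hKpos.ne']
    have : Nat.choose (K - 1) (t + L - 1) * Nat.choose (t + L - 1) t * K =
        (K - t) * (Nat.choose K t * Nat.choose (K - t - 1) (L - 1)) := by
      calc Nat.choose (K - 1) (t + L - 1) * Nat.choose (t + L - 1) t * K
          = Nat.choose (K - 1) t * K * Nat.choose (K - t - 1) (L - 1) := by rw [hC]; ring
        _ = Nat.choose K t * (K - t) * Nat.choose (K - t - 1) (L - 1) := by rw [hB]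
        _ = (K - t) * (Nat.choose K t * Nat.choose (K - t - 1) (L - 1)) := by ring
    exact_mod_cast this
  rw [mul_div_assoc, q1, q2, mul_div_assoc]
end
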